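/- The expansion coefficients of a function in 𝒫 are uniquely determined. Equivalently: fix J ≥ 0 and sequences (a_n^{(j)})_{n≥0} of polynomial growth for 0 ≤ j ≤ J; if Σ_{j=0}^{J} y^j Σ_{n=0}^{∞} a_n^{(j)} e^{−2πny/N} = 0 for all y > 0, then a_n^{(j)} = 0 for all 0 ≤ j ≤ J and all n ≥ 0. -/

import Mathlib

/-- A sequence of complex numbers has polynomial growth. -/
def PolyGrowth (c : ℕ → ℂ) : Prop :=
  ∃ (C : ℝ) (k : ℕ), 0 < C ∧ ∀ n : ℕ, ‖c n‖ ≤ C * (1 + n) ^ k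

/-- The expansion `Σ_{j=0}^{J} y^j Σ_{n=0}^∞ a_n^{(j)} e^{-2πny/N}`. -/
noncomputable def expSum (N : ℕ) (J : ℕ) (a : ℕ → ℕ → ℂ) (y : ℝ) : ℂ :=
  ∑ j ∈ Finset.range (J + 1),
    (y : ℂ) ^ j * ∑' n : ℕ, a j n * (Real.exp (-(2 * Real.pi * n * y / N)) : ℂ)

/-- Membership in the class `𝒫` of functions on `(0,∞)` (Definition 6.3 of the paper):
`φ(y)` and `φ(1/y)` both admit absolutely convergent expansions
`Σ_{j} y^j Σ_{n≥0} c_n^{(j)} e^{-2πny/N}` with coefficients of polynomial growth. -/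
def MemP (N : ℕ) (φ : ℝ → ℂ) : Prop :=
  ∃ (jI j0 : ℕ) (a b : ℕ → ℕ → ℂ),
    (∀ j, PolyGrowth (a j)) ∧ (∀ j, PolyGrowth (b j)) ∧
    (∀ y : ℝ, 0 < y →
      (∀ j, Summable fun n : ℕ => ‖a j n‖ * Real.exp (-(2 * Real.pi * n * y / N))) ∧
      (∀ j, Summable fun n : ℕ => ‖b j n‖ * Real.exp (-(2 * Real.pi * n * y / N))) ∧
      φ y = expSum N jI a y ∧ φ (1 / y) = expSum N j0 b y)

section ExpSumAux
open Filter Finset Topology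


lemma polyGrowthShift (c : ℕ → ℂ)
    (hc : ∃ (C : ℝ) (k : ℕ), 0 < C ∧ ∀ n : ℕ, ‖c n‖ ≤ C * (1 + n) ^ k) (d : ℕ) :
    ∃ (C : ℝ) (k : ℕ), 0 < C ∧ ∀ n : ℕ, ‖c (n + d)‖ ≤ C * (1 + n) ^ k := by
  obtain ⟨C, k, hC, hb⟩ := hc
  refine ⟨C * (1 + d) ^ k, k, by positivity, fun n => ?_⟩
  calc ‖c (n + d)‖ ≤ C * (1 + (n + d) : ℝ) ^ k := by
        have := hb (n + d); push_cast at this ⊢; linarith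
    _ ≤ C * ((1 + d) * (1 + n) : ℝ) ^ k := by
        apply mul_le_mul_of_nonneg_left _ hC.le
        apply pow_le_pow_left₀ (by positivity)
        push_cast
        nlinarith [Nat.cast_nonneg (α := ℝ) n, Nat.cast_nonneg (α := ℝ) d]
    _ = C * (1 + d) ^ k * (1 + n) ^ k := by rw [mul_pow]; ring

lemma summablePolyGrowth (c : ℕ → ℂ)
    (hc : ∃ (C : ℝ) (k : ℕ), 0 < C ∧ ∀ n : ℕ, ‖c n‖ ≤ C * (1 + n) ^ k)
    {t : ℝ} (ht : 0 < t) :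
    Summable fun i : ℕ => ‖c i‖ * Real.exp (-(t * i)) := by
  obtain ⟨C, k, hC, hb⟩ := hc
  have h1 : Summable fun i : ℕ => (i : ℝ) ^ k * Real.exp (-t * i) :=
    Real.summable_pow_mul_exp_neg_nat_mul k ht
  have h2 : Summable fun i : ℕ => ((i + 1 : ℕ) : ℝ) ^ k * Real.exp (-t * (i + 1 : ℕ)) :=
    (summable_nat_add_iff 1).2 h1
  have h3 : Summable fun i : ℕ => C * Real.exp t * (((i + 1 : ℕ) : ℝ) ^ k * Real.exp (-t * (i + 1 : ℕ))) :=
    h2.mul_left _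
  apply Summable.of_nonneg_of_le (fun i => by positivity) _ h3
  intro i
  have hbi := hb i
  have he : Real.exp (-(t * i)) = Real.exp t * Real.exp (-t * (i + 1 : ℕ)) := by
    rw [← Real.exp_add]; push_cast; ring_nf
  rw [he]
  have h4 : ‖c i‖ ≤ C * ((i + 1 : ℕ) : ℝ) ^ k := by
    rw [Nat.cast_add, Nat.cast_one, add_comm]; exact hbi
  have hpos : (0:ℝ) < Real.exp t * Real.exp (-t * ((i + 1 : ℕ) : ℝ)) :=
    mul_pos (Real.exp_pos _) (Real.exp_pos _)
  calc ‖c i‖ * (Real.exp t * Real.exp (-t * ((i + 1 : ℕ) : ℝ)))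
      ≤ C * ((i + 1 : ℕ) : ℝ) ^ k * (Real.exp t * Real.exp (-t * ((i + 1 : ℕ) : ℝ))) :=
        mul_le_mul_of_nonneg_right h4 hpos.le
    _ = C * Real.exp t * (((i + 1 : ℕ) : ℝ) ^ k * Real.exp (-t * ((i + 1 : ℕ) : ℝ))) := by ring

lemma polyCoeffZero : ∀ (J : ℕ) (c : ℕ → ℂ),
    Tendsto (fun y : ℝ => ∑ j ∈ Finset.range (J + 1), c j * (y : ℂ) ^ j) atTop (𝓝 0) →
    ∀ j ≤ J, c j = 0 := by
  intro J
  induction J with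
  | zero =>
    intro c hc j hj
    interval_cases j
    have h1 : Tendsto (fun _ : ℝ => c 0) atTop (𝓝 0) := by
      apply hc.congr; intro y; simp
    exact tendsto_nhds_unique tendsto_const_nhds h1
  | succ J IH =>
    intro c hc j hj
    have hinv : Tendsto (fun y : ℝ => ((y : ℂ) ^ (J + 1))⁻¹) atTop (𝓝 0) := by
      have h0 : Tendsto (fun y : ℝ => ((y : ℂ))⁻¹) atTop (𝓝 0) := by
        have h : Tendsto (fun y : ℝ => ((y⁻¹ : ℝ) : ℂ)) atTop (𝓝 ((0 : ℝ) : ℂ)) :=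
          (Complex.continuous_ofReal.tendsto _).comp tendsto_inv_atTop_zero
        simpa using h
      have := h0.pow (J + 1)
      simp only [zero_pow (Nat.succ_ne_zero J)] at this
      exact this.congr fun y => by rw [inv_pow]
    have h1 : Tendsto (fun y : ℝ =>
        (∑ i ∈ Finset.range (J + 2), c i * (y : ℂ) ^ i) * ((y : ℂ) ^ (J + 1))⁻¹)
        atTop (𝓝 0) := by simpa using hc.mul hinv
    -- second limit: each term
    have hterm : ∀ i ∈ Finset.range (J + 2), Tendsto
        (fun y : ℝ => c i * (y : ℂ) ^ i * ((y : ℂ) ^ (J + 1))⁻¹) atTop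
        (𝓝 (if i = J + 1 then c (J + 1) else 0)) := by
      intro i hi
      rcases eq_or_ne i (J + 1) with rfl | hne
      · simp only [if_pos rfl]
        have hev : ∀ᶠ y : ℝ in atTop,
            c (J + 1) = c (J + 1) * (y : ℂ) ^ (J + 1) * ((y : ℂ) ^ (J + 1))⁻¹ := by
          filter_upwards [eventually_ge_atTop (1 : ℝ)] with y hy
          have hy0 : (y : ℂ) ≠ 0 := by
            simp only [ne_eq, Complex.ofReal_eq_zero]; linarith
          field_simp
        exact Tendsto.congr' hev tendsto_const_nhds
      · simp only [if_neg hne]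
        have hiJ : i ≤ J := by
          have := Finset.mem_range.1 hi; omega
        have heq : ∀ᶠ y : ℝ in atTop,
            c i * (((y : ℂ))⁻¹) ^ (J + 1 - i) = c i * (y : ℂ) ^ i * ((y : ℂ) ^ (J + 1))⁻¹ := by
          filter_upwards [eventually_ge_atTop (1 : ℝ)] with y hy
          have hy0 : (y : ℂ) ≠ 0 := by
            simp only [ne_eq, Complex.ofReal_eq_zero]; linarith
          have hsplit : (y : ℂ) ^ (J + 1) = (y : ℂ) ^ i * (y : ℂ) ^ (J + 1 - i) := by
            rw [← pow_add]; congr 1; omega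
          rw [inv_pow, hsplit, mul_inv]
          have hyi : (y : ℂ) ^ i ≠ 0 := pow_ne_zero _ hy0
          field_simp
        have h0 : Tendsto (fun y : ℝ => ((y : ℂ))⁻¹) atTop (𝓝 0) := by
          have : Tendsto (fun y : ℝ => ((y⁻¹ : ℝ) : ℂ)) atTop (𝓝 ((0 : ℝ) : ℂ)) :=
            (Complex.continuous_ofReal.tendsto _).comp tendsto_inv_atTop_zero
          simpa using this
        have h2 : Tendsto (fun y : ℝ => c i * (((y : ℂ))⁻¹) ^ (J + 1 - i)) atTop (𝓝 0) := by
          have := (h0.pow (J + 1 - i)).const_mul (c i)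
          simpa [zero_pow (by omega : J + 1 - i ≠ 0)] using this
        exact Tendsto.congr' heq h2
    have h2 : Tendsto (fun y : ℝ =>
        ∑ i ∈ Finset.range (J + 2), c i * (y : ℂ) ^ i * ((y : ℂ) ^ (J + 1))⁻¹)
        atTop (𝓝 (∑ i ∈ Finset.range (J + 2), if i = J + 1 then c (J + 1) else 0)) :=
      tendsto_finset_sum _ hterm
    have hsum : (∑ i ∈ Finset.range (J + 2), if i = J + 1 then c (J + 1) else 0) = c (J + 1) := by
      rw [Finset.sum_ite_eq' (Finset.range (J + 2)) (J + 1) (fun _ => c (J + 1))]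
      simp
    rw [hsum] at h2
    have h2' : Tendsto (fun y : ℝ =>
        (∑ i ∈ Finset.range (J + 2), c i * (y : ℂ) ^ i) * ((y : ℂ) ^ (J + 1))⁻¹)
        atTop (𝓝 (c (J + 1))) := by
      apply h2.congr; intro y; rw [Finset.sum_mul]
    have htop : c (J + 1) = 0 := (tendsto_nhds_unique h2' h1)
    have hc' : Tendsto (fun y : ℝ => ∑ i ∈ Finset.range (J + 1), c i * (y : ℂ) ^ i)
        atTop (𝓝 0) := by
      apply hc.congr; intro y
      rw [Finset.sum_range_succ, htop]
      simp
    rcases eq_or_ne j (J + 1) with rfl | hne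
    · exact htop
    · exact IH c hc' j (by omega)

lemma summableShiftOne (c : ℕ → ℂ)
    (hc : ∃ (C : ℝ) (k : ℕ), 0 < C ∧ ∀ n : ℕ, ‖c n‖ ≤ C * (1 + n) ^ k)
    {t : ℝ} (ht : 0 < t) (d : ℕ) :
    Summable fun i : ℕ => ‖c (i + d)‖ * Real.exp (-(t * ((i : ℝ) + 1))) := by
  have base := summablePolyGrowth (fun i => c (i + d)) (polyGrowthShift c hc d) ht
  apply (base.mul_right (Real.exp (-t))).congr
  intro i
  simp only [mul_assoc, ← Real.exp_add]
  congr 2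
  ring

/-- Auxiliary tail function. -/
noncomputable def gAux (N : ℕ) (a : ℕ → ℕ → ℂ) (n j : ℕ) (y : ℝ) : ℂ :=
  ∑' i : ℕ, a j (i + n + 1) * (Real.exp (-(2 * Real.pi * ((i : ℝ) + 1) * y / N)) : ℂ)

lemma tsumSplit (N : ℕ) (hN : 0 < (N : ℝ)) (n : ℕ) (y : ℝ) (hy : 0 < y)
    (c : ℕ → ℂ) (hc : ∃ (C : ℝ) (k : ℕ), 0 < C ∧ ∀ m : ℕ, ‖c m‖ ≤ C * (1 + m) ^ k)
    (hzero : ∀ m < n, c m = 0) :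
    (∑' m : ℕ, c m * (Real.exp (-(2 * Real.pi * m * y / N)) : ℂ))
      = (c n + ∑' i : ℕ, c (i + n + 1) * (Real.exp (-(2 * Real.pi * ((i : ℝ) + 1) * y / N)) : ℂ))
        * (Real.exp (-(2 * Real.pi * n * y / N)) : ℂ) := by
  have ht : 0 < 2 * Real.pi * y / N := by
    have := Real.pi_pos; positivity
  have Sa : Summable fun m : ℕ => c m * (Real.exp (-(2 * Real.pi * m * y / N)) : ℂ) := by
    apply Summable.of_norm
    apply (summablePolyGrowth c hc ht).congr
    intro m
    rw [norm_mul, Complex.norm_real, Real.norm_eq_abs, abs_of_pos (Real.exp_pos _)]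
    congr 2
    ring
  have S1 : Summable fun i : ℕ =>
      c (i + n) * (Real.exp (-(2 * Real.pi * (i + n : ℕ) * y / N)) : ℂ) :=
    (summable_nat_add_iff n).2 Sa
  have hzs : (∑ i ∈ Finset.range n, c i * (Real.exp (-(2 * Real.pi * i * y / N)) : ℂ)) = 0 := by
    apply Finset.sum_eq_zero
    intro i hi
    rw [hzero i (Finset.mem_range.1 hi), zero_mul]
  calc (∑' m : ℕ, c m * (Real.exp (-(2 * Real.pi * m * y / N)) : ℂ))
      = (∑ i ∈ Finset.range n, c i * (Real.exp (-(2 * Real.pi * i * y / N)) : ℂ))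
        + ∑' i : ℕ, c (i + n) * (Real.exp (-(2 * Real.pi * (i + n : ℕ) * y / N)) : ℂ) :=
        (Summable.sum_add_tsum_nat_add n Sa).symm
    _ = ∑' i : ℕ, c (i + n) * (Real.exp (-(2 * Real.pi * (i + n : ℕ) * y / N)) : ℂ) := by
        rw [hzs, zero_add]
    _ = c (0 + n) * (Real.exp (-(2 * Real.pi * (0 + n : ℕ) * y / N)) : ℂ)
        + ∑' i : ℕ, c (i + 1 + n) * (Real.exp (-(2 * Real.pi * (i + 1 + n : ℕ) * y / N)) : ℂ) :=
        Summable.tsum_eq_zero_add S1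
    _ = c n * (Real.exp (-(2 * Real.pi * n * y / N)) : ℂ)
        + ∑' i : ℕ, c (i + n + 1) * (Real.exp (-(2 * Real.pi * (i + n + 1 : ℕ) * y / N)) : ℂ) := by
        congr 1
        · norm_num
        · apply tsum_congr
          intro i
          have : i + 1 + n = i + n + 1 := by omega
          rw [this]
    _ = c n * (Real.exp (-(2 * Real.pi * n * y / N)) : ℂ)
        + (∑' i : ℕ, c (i + n + 1) * (Real.exp (-(2 * Real.pi * ((i : ℝ) + 1) * y / N)) : ℂ))
          * (Real.exp (-(2 * Real.pi * n * y / N)) : ℂ) := by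
        congr 1
        rw [← tsum_mul_right]
        apply tsum_congr
        intro i
        have hE : (Real.exp (-(2 * Real.pi * (i + n + 1 : ℕ) * y / N)) : ℂ)
            = (Real.exp (-(2 * Real.pi * ((i : ℝ) + 1) * y / N)) : ℂ)
              * (Real.exp (-(2 * Real.pi * n * y / N)) : ℂ) := by
          rw [← Complex.ofReal_mul, ← Real.exp_add]
          congr 1
          push_cast
          ring
        rw [hE]
        ring
    _ = (c n + ∑' i : ℕ, c (i + n + 1) * (Real.exp (-(2 * Real.pi * ((i : ℝ) + 1) * y / N)) : ℂ))
        * (Real.exp (-(2 * Real.pi * n * y / N)) : ℂ) := by ring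

lemma gAuxTendsto (N : ℕ) (hN : 0 < (N : ℝ)) (a : ℕ → ℕ → ℂ) (n j : ℕ)
    (ha : ∃ (C : ℝ) (k : ℕ), 0 < C ∧ ∀ m : ℕ, ‖a j m‖ ≤ C * (1 + m) ^ k) :
    Tendsto (fun y : ℝ => (y : ℂ) ^ j * gAux N a n j y) atTop (𝓝 0) := by
  have hb : (0 : ℝ) < 2 * Real.pi / N := by
    have := Real.pi_pos; positivity
  set K : ℝ := ∑' i : ℕ, ‖a j (i + n + 1)‖ * Real.exp (-(2 * Real.pi / N * ((i : ℝ) + 1)))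
    with hK
  have hKsum : Summable fun i : ℕ =>
      ‖a j (i + n + 1)‖ * Real.exp (-(2 * Real.pi / N * ((i : ℝ) + 1))) :=
    summableShiftOne (a j) ha hb (n + 1) |>.congr fun i => by
      have : i + (n + 1) = i + n + 1 := by omega
      rw [this]
  -- the decay bound function
  have hdecay : Tendsto (fun y : ℝ =>
      Real.exp (2 * Real.pi / N) * K * (y ^ j * Real.exp (-(2 * Real.pi / N) * y)))
      atTop (𝓝 0) := by
    have h0 := tendsto_rpow_mul_exp_neg_mul_atTop_nhds_zero (j : ℝ) (2 * Real.pi / N) hb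
    have h1 : Tendsto (fun y : ℝ => y ^ j * Real.exp (-(2 * Real.pi / N) * y)) atTop (𝓝 0) := by
      apply h0.congr'
      filter_upwards [eventually_ge_atTop (0 : ℝ)] with y hy
      rw [Real.rpow_natCast]
    have := h1.const_mul (Real.exp (2 * Real.pi / N) * K)
    simpa using this
  apply squeeze_zero_norm' _ hdecay
  filter_upwards [eventually_ge_atTop (1 : ℝ)] with y hy
  have hy0 : 0 < y := lt_of_lt_of_le one_pos hy
  have hty : 0 < 2 * Real.pi * y / N := by
    have := Real.pi_pos; positivity
  -- summability of the series of norms at parameter y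
  have hysum : Summable fun i : ℕ =>
      ‖a j (i + n + 1)‖ * Real.exp (-(2 * Real.pi * ((i : ℝ) + 1) * y / N)) :=
    (summableShiftOne (a j) ha hty (n + 1)).congr fun i => by
      have h2 : i + (n + 1) = i + n + 1 := by omega
      rw [h2]
      congr 2
      ring
  -- bound the norm of gAux
  have hnorm : ‖gAux N a n j y‖ ≤ K * Real.exp (-(2 * Real.pi / N) * (y - 1)) := by
    have step1 : ‖gAux N a n j y‖ ≤
        ∑' i : ℕ, ‖a j (i + n + 1)‖ * Real.exp (-(2 * Real.pi * ((i : ℝ) + 1) * y / N)) := by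
      rw [gAux]
      refine le_trans (norm_tsum_le_tsum_norm ?_) (le_of_eq (tsum_congr fun i => ?_))
      · apply hysum.congr
        intro i
        rw [norm_mul, Complex.norm_real, Real.norm_eq_abs, abs_of_pos (Real.exp_pos _)]
      · rw [norm_mul, Complex.norm_real, Real.norm_eq_abs, abs_of_pos (Real.exp_pos _)]
    have step2 : (∑' i : ℕ, ‖a j (i + n + 1)‖ * Real.exp (-(2 * Real.pi * ((i : ℝ) + 1) * y / N)))
        ≤ ∑' i : ℕ, ‖a j (i + n + 1)‖ * Real.exp (-(2 * Real.pi / N * ((i : ℝ) + 1)))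
            * Real.exp (-(2 * Real.pi / N) * (y - 1)) := by
      apply Summable.tsum_le_tsum _ hysum (hKsum.mul_right _)
      intro i
      rw [mul_assoc (‖a j (i + n + 1)‖), ← Real.exp_add]
      apply mul_le_mul_of_nonneg_left _ (norm_nonneg _)
      apply Real.exp_le_exp.2
      have hnn : (0:ℝ) ≤ 2 * Real.pi / N * ((i : ℝ) * (y - 1)) :=
        mul_nonneg hb.le (mul_nonneg (Nat.cast_nonneg i) (by linarith))
      have hexp : -(2 * Real.pi * ((i : ℝ) + 1) * y / N)
          = -(2 * Real.pi / N * ((i : ℝ) + 1)) + -(2 * Real.pi / N) * (y - 1)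
            - 2 * Real.pi / N * ((i : ℝ) * (y - 1)) := by ring
      rw [hexp]
      linarith
    calc ‖gAux N a n j y‖
        ≤ ∑' i : ℕ, ‖a j (i + n + 1)‖ * Real.exp (-(2 * Real.pi * ((i : ℝ) + 1) * y / N)) :=
          step1
      _ ≤ ∑' i : ℕ, ‖a j (i + n + 1)‖ * Real.exp (-(2 * Real.pi / N * ((i : ℝ) + 1)))
            * Real.exp (-(2 * Real.pi / N) * (y - 1)) := step2
      _ = K * Real.exp (-(2 * Real.pi / N) * (y - 1)) := tsum_mul_right
  -- final bound
  have hnormy : ‖(y : ℂ) ^ j * gAux N a n j y‖ = y ^ j * ‖gAux N a n j y‖ := by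
    rw [norm_mul, norm_pow, Complex.norm_real, Real.norm_eq_abs, abs_of_pos hy0]
  rw [hnormy]
  have hKnn : 0 ≤ K := tsum_nonneg fun i => mul_nonneg (norm_nonneg _) (Real.exp_pos _).le
  calc y ^ j * ‖gAux N a n j y‖
      ≤ y ^ j * (K * Real.exp (-(2 * Real.pi / N) * (y - 1))) :=
        mul_le_mul_of_nonneg_left hnorm (by positivity)
    _ = Real.exp (2 * Real.pi / N) * K * (y ^ j * Real.exp (-(2 * Real.pi / N) * y)) := by
        rw [show (-(2 * Real.pi / N) * (y - 1)) = 2 * Real.pi / N + -(2 * Real.pi / N) * y by ring,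
          Real.exp_add]
        ring

theorem expSum_coeff_unique' (N : ℕ) (hN : 1 ≤ N) (J : ℕ) (a : ℕ → ℕ → ℂ)
    (ha : ∀ j, ∃ (C : ℝ) (k : ℕ), 0 < C ∧ ∀ m : ℕ, ‖a j m‖ ≤ C * (1 + m) ^ k)
    (h : ∀ y : ℝ, 0 < y → (∑ j ∈ Finset.range (J + 1),
      (y : ℂ) ^ j * ∑' m : ℕ, a j m * (Real.exp (-(2 * Real.pi * m * y / N)) : ℂ)) = 0) :
    ∀ j ≤ J, ∀ n : ℕ, a j n = 0 := by
  have hNpos : (0 : ℝ) < N := by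
    have : (1 : ℝ) ≤ N := by exact_mod_cast hN
    linarith
  suffices H : ∀ n : ℕ, ∀ j ≤ J, a j n = 0 by
    intro j hj n; exact H n j hj
  intro n
  induction n using Nat.strong_induction_on with
  | _ n IH =>
  -- key identity
  have key : ∀ y : ℝ, 0 < y →
      (∑ j ∈ Finset.range (J + 1), a j n * (y : ℂ) ^ j)
        = - ∑ j ∈ Finset.range (J + 1), (y : ℂ) ^ j * gAux N a n j y := by
    intro y hy
    have hEn : (Real.exp (-(2 * Real.pi * n * y / N)) : ℂ) ≠ 0 := by
      simp [Real.exp_ne_zero]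
    have hsum : (∑ j ∈ Finset.range (J + 1),
        (y : ℂ) ^ j * ∑' m : ℕ, a j m * (Real.exp (-(2 * Real.pi * m * y / N)) : ℂ))
        = (∑ j ∈ Finset.range (J + 1),
            ((a j n * (y : ℂ) ^ j) + (y : ℂ) ^ j * gAux N a n j y))
          * (Real.exp (-(2 * Real.pi * n * y / N)) : ℂ) := by
      rw [Finset.sum_mul]
      apply Finset.sum_congr rfl
      intro j hj
      have hjJ : j ≤ J := by have := Finset.mem_range.1 hj; omega
      rw [tsumSplit N hNpos n y hy (a j) (ha j) (fun m hm => IH m hm j hjJ)]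
      rw [gAux]
      ring
    have h0 := h y hy
    rw [hsum] at h0
    rcases mul_eq_zero.1 h0 with h1 | h1
    · rw [Finset.sum_add_distrib] at h1
      exact eq_neg_of_add_eq_zero_left h1
    · exact absurd h1 hEn
  -- limits
  have hlim : Tendsto (fun y : ℝ => ∑ j ∈ Finset.range (J + 1), a j n * (y : ℂ) ^ j)
      atTop (𝓝 0) := by
    have hg : Tendsto (fun y : ℝ => -∑ j ∈ Finset.range (J + 1), (y : ℂ) ^ j * gAux N a n j y)
        atTop (𝓝 0) := by
      have := (tendsto_finset_sum (Finset.range (J + 1))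
        (fun j _ => gAuxTendsto N hNpos a n j (ha j))).neg
      simpa using this
    apply hg.congr'
    filter_upwards [eventually_gt_atTop (0 : ℝ)] with y hy
    exact (key y hy).symm
  exact polyCoeffZero J (fun j => a j n) hlim

end ExpSumAux

/-- Uniqueness of the expansion coefficients of a function in `𝒫`: if the expansion
vanishes identically on `(0,∞)`, then all coefficients vanish. -/
theorem expSum_coeff_unique (N : ℕ) (hN : 1 ≤ N) (J : ℕ) (a : ℕ → ℕ → ℂ)
    (ha : ∀ j, PolyGrowth (a j))
    (h : ∀ y : ℝ, 0 < y → expSum N J a y = 0) :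
    ∀ j ≤ J, ∀ n : ℕ, a j n = 0 :=
  expSum_coeff_unique' N hN J a ha h
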